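/- Let m, v ∈ ℝ³ with |m| = 1 and m · v = 0, and let k > 0. Define m⁺ = (m + k v)/|m + k v|. Then |m⁺ − m − k v| ≤ (1/2) k² |v|². -/

import Mathlib

open RealInnerProductSpace

/-- Second-order nodewise geometric estimate for the nodal projection: if `|m| = 1`,
`m · v = 0` and `k > 0`, then `m⁺ = (m + k v)/|m + k v|` satisfies
`|m⁺ − m − k v| ≤ (1/2) k² |v|²`. -/
theorem projection_step_second_estimate (m v : EuclideanSpace ℝ (Fin 3)) (k : ℝ)
    (hm : ‖m‖ = 1) (horth : ⟪m, v⟫ = 0) (hk : 0 < k) :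
    ‖(‖m + k • v‖⁻¹) • (m + k • v) - m - k • v‖ ≤ 1 / 2 * k ^ 2 * ‖v‖ ^ 2 := by
  set w := m + k • v with hw
  have hwsq : ‖w‖ ^ 2 = 1 + k ^ 2 * ‖v‖ ^ 2 := by
    have := norm_add_sq_real m (k • v)
    rw [inner_smul_right, horth, norm_smul] at this
    simp only [hw, this, hm]
    rw [mul_pow]
    simp [abs_of_pos hk]

  have hw1 : (1:ℝ) ≤ ‖w‖ := by
    nlinarith [norm_nonneg w, sq_nonneg k, sq_nonneg ‖v‖, sq_nonneg (k * ‖v‖)]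
  have hwpos : (0:ℝ) < ‖w‖ := lt_of_lt_of_le one_pos hw1
  have heq : (‖w‖⁻¹) • w - m - k • v = (‖w‖⁻¹ - 1) • w := by
    rw [sub_smul, one_smul, hw]
    abel
  rw [heq, norm_smul, Real.norm_eq_abs, abs_of_nonpos (by
    simp only [sub_nonpos]
    exact inv_le_one_of_one_le₀ hw1)]
  have : -(‖w‖⁻¹ - 1) * ‖w‖ = ‖w‖ - 1 := by
    field_simp
    ring
  rw [this]
  nlinarith [hwsq, sq_nonneg (‖w‖ - 1 - 1/2 * k^2 * ‖v‖^2)]
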